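/- Let r_b ≥ 2, r_γ ≥ 1, let d be a positive integer, 0 < ε < 1, and let H be an r_γ-uniform hypergraph with Turán density zero. Then there exist constants K_1 = K_1(r_b, r_γ, d, ε, H) and K_2 = K_2(r_b, r_γ, d, ε, H) such that for every (r_b, r_γ)-uniform fiber bundle (B, γ, F) with dim_H(B, γ, F) < d and |γ(b)| ≥ ε·C(|F|, r_γ) for all b ∈ V(B): if |F| ≥ K_1, then χ(B) ≤ K_2. -/

import Mathlib

open Finset

/-- `A` embeds into `B` (i.e. `B` contains a copy of `A`). -/
def Embeds {α β : Type} [DecidableEq β] (A : Finset (Finset α)) (B : Finset (Finset β)) : Prop :=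
  ∃ f : α → β, Function.Injective f ∧ ∀ e ∈ A, e.image f ∈ B

/-- The chromatic number of the hypergraph with edge set `A` is at most `K`. -/
def ChromAtMost {α : Type} (A : Finset (Finset α)) (K : ℕ) : Prop :=
  ∃ f : α → Fin K, ∀ e ∈ A, ∃ x ∈ e, ∃ y ∈ e, f x ≠ f y

/-- The Turán number `ex(N, H)` for `r`-uniform hypergraphs on `N` vertices. -/
noncomputable def exNum {α : Type} (r : ℕ) (H : Finset (Finset α)) (N : ℕ) : ℕ :=
  sSup {c : ℕ | ∃ G : Finset (Finset (Fin N)),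
    (∀ e ∈ G, e.card = r) ∧ ¬ Embeds H G ∧ G.card = c}

/-- The section of a set `X` of base vertices in the fiber bundle with fibers `γ`:
the hypergraph on `F` whose edges lie in every fiber over `X`. -/
def sectionOf {V F : Type} [Fintype F] [DecidableEq F]
    (γ : V → Finset (Finset F)) (X : Finset V) : Finset (Finset F) :=
  Finset.univ.filter (fun e => ∀ x ∈ X, e ∈ γ x)

/-- `dim_H(B, γ, F) ≥ d`: there are `d` pairwise disjoint edges of the base hypergraph `BE`
such that every section of a transversal choice of vertices contains a copy of `H`. -/
def HasBundleDim {V F α : Type} [DecidableEq V] [Fintype F] [DecidableEq F]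
    (BE : Finset (Finset V)) (γ : V → Finset (Finset F))
    (H : Finset (Finset α)) (d : ℕ) : Prop :=
  ∃ M : Finset (Finset V), M.card = d ∧ (∀ e ∈ M, e ∈ BE) ∧
    (∀ e₁ ∈ M, ∀ e₂ ∈ M, e₁ ≠ e₂ → Disjoint e₁ e₂) ∧
    ∀ sel : Finset V → V, (∀ e ∈ M, sel e ∈ e) →
      Embeds H (sectionOf γ (M.image sel))


set_option maxHeartbeats 1600000

private def cbFun (a : ℕ) : ℕ → ℕ
  | 0 => 1
  | n+1 => a + 1 + 2 ^ a * cbFun a n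

private lemma cbFun_pos (a n : ℕ) : 0 < cbFun a n := by
  cases n with
  | zero => simp [cbFun]
  | succ n => simp [cbFun]

private lemma embeds_mono {α β : Type} [DecidableEq β] {H : Finset (Finset α)}
    {A B : Finset (Finset β)} (hAB : A ⊆ B) (h : Embeds H A) : Embeds H B := by
  obtain ⟨f, hf, he⟩ := h
  exact ⟨f, hf, fun e heH => hAB (he e heH)⟩

private lemma mem_sectionOf {V F : Type} [Fintype F] [DecidableEq F]
    {γ : V → Finset (Finset F)} {X : Finset V} {e : Finset F} :
    e ∈ sectionOf γ X ↔ ∀ x ∈ X, e ∈ γ x := by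
  simp [sectionOf]

private lemma mul_add_ne {p q g₁ g₂ c : ℕ} (h₁ : g₁ < c) (h₂ : g₂ < c) (h : p ≠ q) :
    p * c + g₁ ≠ q * c + g₂ := by
  have key : ∀ p' q' g₁' g₂' : ℕ, g₁' < c → p' < q' → p' * c + g₁' ≠ q' * c + g₂' := by
    intro p' q' g₁' g₂' hg hpq
    have h1 : p' * c + g₁' < (p' + 1) * c := by nlinarith
    have h2 : (p' + 1) * c ≤ q' * c := Nat.mul_le_mul_right c (by omega)
    omega
  rcases Nat.lt_or_ge p q with h' | h'
  · exact key p q g₁ g₂ h₁ h'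
  · have h'' : q < p := by omega
    exact fun hEq => (key q p g₂ g₁ h₂ h'') hEq.symm

private lemma auxColor (rb rγ d nb nf : ℕ) (hrb : 2 ≤ rb) (hd : 0 < d)
    (ε : ℝ) (hε0 : 0 < ε) (hε1 : ε < 1)
    (BE : Finset (Finset (Fin nb))) (γ : Fin nb → Finset (Finset (Fin nf)))
    (hBE : ∀ e ∈ BE, e.card = rb)
    (hγu : ∀ b, ∀ e ∈ γ b, e.card = rγ)
    (hγd : ∀ b, ε * (nf.choose rγ : ℝ) ≤ ((γ b).card : ℝ))
    (hC : (0:ℝ) < (nf.choose rγ : ℝ))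
    (mh : ℕ) (H : Finset (Finset (Fin mh)))
    (HK : ∀ G : Finset (Finset (Fin nf)), (∀ e ∈ G, e.card = rγ) →
      (ε/2)^d * (nf.choose rγ : ℝ) ≤ (G.card : ℝ) → Embeds H G)
    (hnd : ¬ HasBundleDim BE γ H d)
    (D₀ : ℕ) (hD₀ : (1:ℝ) ≤ (D₀ : ℝ) * (ε/2)^(d-1)) :
    ∀ (fuel : ℕ) (R : Finset (Finset (Fin nf))) (U : Finset (Fin nb)),
      (∀ e ∈ R, e.card = rγ) →
      (∀ x ∈ U, ((γ x ∩ R).card : ℝ) ≤ (ε/2) * (R.card : ℝ)) →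
      ((D₀ : ℝ) - (fuel : ℝ)) * ((ε/2)^(d-1) * (nf.choose rγ : ℝ)) ≤ (R.card : ℝ) →
      ∃ f : Fin nb → ℕ, (∀ x, f x < cbFun (d * rb) fuel) ∧
        ∀ e ∈ BE, e ⊆ U → ∃ x ∈ e, ∃ y ∈ e, f x ≠ f y := by
  classical
  have hα0 : (0:ℝ) < ε/2 := by positivity
  have hα1 : ε/2 ≤ 1 := by linarith
  set C : ℝ := (nf.choose rγ : ℝ) with hCdef
  set α : ℝ := ε/2 with hαdef
  -- generic card bound for uniform families
  have hucard : ∀ S : Finset (Finset (Fin nf)), (∀ e ∈ S, e.card = rγ) → (S.card : ℝ) ≤ C := by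
    intro S hS
    have hsub : S ⊆ Finset.powersetCard rγ Finset.univ := by
      intro e he; rw [Finset.mem_powersetCard]; exact ⟨Finset.subset_univ _, hS e he⟩
    have h := Finset.card_le_card hsub
    rw [Finset.card_powersetCard, Finset.card_univ, Fintype.card_fin] at h
    rw [hCdef]
    exact_mod_cast h
  have hsdiffcard : ∀ (x : Fin nb) (R' : Finset (Finset (Fin nf))),
      ((γ x \ R').card : ℝ) = ((γ x).card : ℝ) - ((γ x ∩ R').card : ℝ) := by
    intro x R'
    have h := Finset.card_sdiff_add_card_inter (γ x) R'
    have h' : ((γ x \ R').card : ℝ) + ((γ x ∩ R').card : ℝ) = ((γ x).card : ℝ) := by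
      exact_mod_cast h
    linarith
  intro fuel
  induction fuel with
  | zero =>
    intro R U hRu hRγ hR3
    refine ⟨fun _ => 0, fun _ => cbFun_pos _ _, ?_⟩
    intro e he hsub
    exfalso
    have hecard := hBE e he
    have hene : e.Nonempty := Finset.card_pos.1 (by omega)
    obtain ⟨x, hx⟩ := hene
    have hxU : x ∈ U := hsub hx
    have h1 : ((γ x ∩ R).card : ℝ) ≤ α * (R.card : ℝ) := hRγ x hxU
    have hRC : (R.card : ℝ) ≤ C := hucard R hRu
    have h3 : α * C ≤ ((γ x \ R).card : ℝ) := by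
      have h2 := hsdiffcard x R
      have h4 := hγd x
      rw [h2]
      rw [hαdef] at h1 ⊢
      rw [hCdef] at h4 ⊢
      nlinarith
    have h4 : ((R ∪ (γ x \ R)).card : ℝ) ≤ C := by
      apply hucard
      intro e' he'
      rcases Finset.mem_union.1 he' with h | h
      · exact hRu e' h
      · exact hγu x e' (Finset.mem_sdiff.1 h).1
    have h5 : ((R ∪ (γ x \ R)).card : ℝ) = (R.card : ℝ) + ((γ x \ R).card : ℝ) := by
      rw [Finset.card_union_of_disjoint Finset.disjoint_sdiff]; push_cast; ring
    have h6 : C ≤ (R.card : ℝ) := by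
      have h7 : ((D₀ : ℝ) - ((0:ℕ) : ℝ)) * (α^(d-1) * C) ≤ (R.card : ℝ) := hR3
      push_cast at h7
      nlinarith
    nlinarith
  | succ n IH =>
    intro R U hRu hRγ hR3
    by_cases hEx : ∃ e ∈ BE, e ⊆ U
    case neg =>
      exact ⟨fun _ => 0, fun _ => cbFun_pos _ _, fun e he hsub => absurd ⟨e, he, hsub⟩ hEx⟩
    obtain ⟨e₀, he₀, he₀U⟩ := hEx
    set γ' : Fin nb → Finset (Finset (Fin nf)) := fun x => γ x \ R with hγ'def
    have hγ'sub : ∀ x, γ' x ⊆ γ x := fun x => Finset.sdiff_subset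
    have hγ'R : ∀ x, Disjoint (γ' x) R := fun x => Finset.sdiff_disjoint
    have hγ'd : ∀ x ∈ U, α * C ≤ ((γ' x).card : ℝ) := by
      intro x hxU
      have h1 := hRγ x hxU
      have hRC : (R.card : ℝ) ≤ C := hucard R hRu
      have h2 := hsdiffcard x R
      have h4 := hγd x
      show α * C ≤ ((γ x \ R).card : ℝ)
      rw [h2]
      rw [hαdef] at h1 ⊢
      rw [hCdef] at h4 ⊢
      nlinarith
    set P : ℕ → Prop := fun j => ∃ M : Finset (Finset (Fin nb)), M.card = j ∧
      (∀ E ∈ M, E ∈ BE ∧ E ⊆ U) ∧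
      (∀ e₁ ∈ M, ∀ e₂ ∈ M, e₁ ≠ e₂ → Disjoint e₁ e₂) ∧
      (∀ sel : Finset (Fin nb) → Fin nb, (∀ E ∈ M, sel E ∈ E) →
        α ^ j * C ≤ ((sectionOf γ' (M.image sel)).card : ℝ)) with hPdef
    have hP1 : P 1 := by
      refine ⟨{e₀}, Finset.card_singleton _, by simp [he₀, he₀U], by simp, ?_⟩
      intro sel hsel
      have hsel0 : sel e₀ ∈ e₀ := hsel e₀ (Finset.mem_singleton_self e₀)
      rw [Finset.image_singleton]
      have hsec : sectionOf γ' ({sel e₀} : Finset (Fin nb)) = γ' (sel e₀) := by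
        ext e'; simp [sectionOf]
      rw [hsec, pow_one]
      exact hγ'd _ (he₀U hsel0)
    have hPd : ¬ P d := by
      rintro ⟨M, hM1, hM2, hM3, hM4⟩
      apply hnd
      refine ⟨M, hM1, fun E hE => (hM2 E hE).1, hM3, ?_⟩
      intro sel hsel
      have hMne : M.Nonempty := Finset.card_pos.1 (by omega)
      obtain ⟨E₁, hE₁⟩ := hMne
      have hXne : sel E₁ ∈ M.image sel := Finset.mem_image_of_mem sel hE₁
      have hsec := hM4 sel hsel
      have huni : ∀ e' ∈ sectionOf γ' (M.image sel), e'.card = rγ := by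
        intro e' he'
        exact hγu _ _ (hγ'sub _ ((mem_sectionOf.1 he') _ hXne))
      have hemb := HK _ huni hsec
      refine embeds_mono ?_ hemb
      intro e' he'
      rw [mem_sectionOf] at he' ⊢
      exact fun x hx => hγ'sub x (he' x hx)
    set mset : Finset ℕ := (Finset.range (d+1)).filter P with hmsetdef
    have h1mem : 1 ∈ mset := Finset.mem_filter.2 ⟨Finset.mem_range.2 (by omega), hP1⟩
    have hmne : mset.Nonempty := ⟨1, h1mem⟩
    set m : ℕ := mset.max' hmne with hmdef
    have hmmem : m ∈ Finset.range (d+1) ∧ P m := Finset.mem_filter.1 (mset.max'_mem hmne)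
    rw [Finset.mem_range] at hmmem
    have hm1 : 1 ≤ m := mset.le_max' 1 h1mem
    have hmd : m ≤ d - 1 := by
      have h1 := hmmem.1
      have h2 : m ≠ d := fun h => hPd (h ▸ hmmem.2)
      omega
    obtain ⟨M, hM1, hM2, hM3, hM4⟩ := hmmem.2
    set W : Finset (Fin nb) := M.biUnion id with hWdef
    have hMW : ∀ E ∈ M, E ⊆ W := fun E hE => Finset.subset_biUnion_of_mem id hE
    have hWcard : W.card ≤ d * rb := by
      calc W.card ≤ ∑ E ∈ M, E.card := Finset.card_biUnion_le
        _ = ∑ _E ∈ M, rb := Finset.sum_congr rfl (fun E hE => hBE E (hM2 E hE).1)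
        _ = m * rb := by rw [Finset.sum_const, smul_eq_mul, hM1]
        _ ≤ d * rb := Nat.mul_le_mul_right _ (by omega)
    set Poor : Fin nb → Prop := fun x => ∃ X : Finset (Fin nb), X ⊆ W ∧ X.Nonempty ∧
      Disjoint (sectionOf γ' X) R ∧
      α ^ (d-1) * C ≤ ((sectionOf γ' X).card : ℝ) ∧
      ((γ x ∩ sectionOf γ' X).card : ℝ) ≤ α * ((sectionOf γ' X).card : ℝ) with hPoordef
    have hfail : ∀ e ∈ BE, e ⊆ U → Disjoint e W → ∃ x ∈ e, Poor x := by
      intro e he heU heW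
      have hene : e.Nonempty := Finset.card_pos.1 (by have := hBE e he; omega)
      have heM : e ∉ M := by
        intro hmem
        obtain ⟨z, hz⟩ := hene
        exact Finset.disjoint_left.1 heW hz (hMW e hmem hz)
      have hM'card : (insert e M).card = m + 1 := by
        rw [Finset.card_insert_of_notMem heM, hM1]
      have hnP : ¬ P (m+1) := by
        intro hp
        have hmem : m + 1 ∈ mset :=
          Finset.mem_filter.2 ⟨Finset.mem_range.2 (by omega), hp⟩
        have := mset.le_max' _ hmem
        omega
      have hM'2 : ∀ E ∈ insert e M, E ∈ BE ∧ E ⊆ U := by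
        intro E hE
        rcases Finset.mem_insert.1 hE with h | h
        · subst h; exact ⟨he, heU⟩
        · exact hM2 E h
      have hM'3 : ∀ e₁ ∈ insert e M, ∀ e₂ ∈ insert e M, e₁ ≠ e₂ → Disjoint e₁ e₂ := by
        intro e₁ h₁ e₂ h₂ hne
        rcases Finset.mem_insert.1 h₁ with h₁' | h₁' <;> rcases Finset.mem_insert.1 h₂ with h₂' | h₂'
        · subst h₁'; subst h₂'; exact absurd rfl hne
        · subst h₁'; exact Finset.disjoint_of_subset_right (hMW _ h₂') heW
        · subst h₂'; exact (Finset.disjoint_of_subset_right (hMW _ h₁') heW).symm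
        · exact hM3 _ h₁' _ h₂' hne
      have hnsel : ¬ ∀ sel : Finset (Fin nb) → Fin nb, (∀ E ∈ insert e M, sel E ∈ E) →
          α ^ (m+1) * C ≤ ((sectionOf γ' ((insert e M).image sel)).card : ℝ) := by
        intro hsel
        exact hnP ⟨insert e M, hM'card, hM'2, hM'3, hsel⟩
      push_neg at hnsel
      obtain ⟨sel, hselmem, hselcard⟩ := hnsel
      have hxe : sel e ∈ e := hselmem e (Finset.mem_insert_self e M)
      have hXW : M.image sel ⊆ W := by
        intro y hy
        obtain ⟨E, hE, rfl⟩ := Finset.mem_image.1 hy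
        exact hMW E hE (hselmem E (Finset.mem_insert_of_mem hE))
      have hMne : M.Nonempty := Finset.card_pos.1 (by omega)
      have hXne : (M.image sel).Nonempty := hMne.image sel
      have hSR : Disjoint (sectionOf γ' (M.image sel)) R := by
        obtain ⟨y, hy⟩ := hXne
        rw [Finset.disjoint_left]
        intro e' he'
        exact Finset.disjoint_left.1 (hγ'R y) ((mem_sectionOf.1 he') y hy)
      have hSlb : α ^ m * C ≤ ((sectionOf γ' (M.image sel)).card : ℝ) := by
        apply hM4 sel
        intro E hE; exact hselmem E (Finset.mem_insert_of_mem hE)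
      have hsubsec : γ (sel e) ∩ sectionOf γ' (M.image sel) ⊆
          sectionOf γ' ((insert e M).image sel) := by
        intro e' he'
        have he'γ := (Finset.mem_inter.1 he').1
        have he'S := (Finset.mem_inter.1 he').2
        have he'R : e' ∉ R := Finset.disjoint_left.1 hSR he'S
        rw [Finset.image_insert, mem_sectionOf]
        intro y hy
        rcases Finset.mem_insert.1 hy with rfl | hy'
        · show e' ∈ γ (sel e) \ R
          exact Finset.mem_sdiff.2 ⟨he'γ, he'R⟩
        · exact mem_sectionOf.1 he'S y hy'
      have hsmall : ((γ (sel e) ∩ sectionOf γ' (M.image sel)).card : ℝ) < α ^ (m+1) * C :=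
        lt_of_le_of_lt (by exact_mod_cast Finset.card_le_card hsubsec) hselcard
      refine ⟨sel e, hxe, M.image sel, hXW, hXne, hSR, ?_, ?_⟩
      · calc α ^ (d-1) * C ≤ α ^ m * C :=
              mul_le_mul_of_nonneg_right (pow_le_pow_of_le_one hα0.le hα1 hmd) hC.le
          _ ≤ _ := hSlb
      · have h1 : α ^ (m+1) * C = α * (α ^ m * C) := by ring
        have h2 : α * (α ^ m * C) ≤ α * ((sectionOf γ' (M.image sel)).card : ℝ) :=
          mul_le_mul_of_nonneg_left hSlb hα0.le
        linarith
    set wsel : Fin nb → Finset (Fin nb) :=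
      fun x => if h : Poor x then Classical.choose h else ∅ with hwseldef
    have hwspec : ∀ x, Poor x → wsel x ⊆ W ∧ (wsel x).Nonempty ∧
        Disjoint (sectionOf γ' (wsel x)) R ∧
        α ^ (d-1) * C ≤ ((sectionOf γ' (wsel x)).card : ℝ) ∧
        ((γ x ∩ sectionOf γ' (wsel x)).card : ℝ) ≤ α * ((sectionOf γ' (wsel x)).card : ℝ) := by
      intro x h
      simp only [hwseldef, dif_pos h]
      exact Classical.choose_spec h
    set UX : Finset (Fin nb) → Finset (Fin nb) :=
      fun X => (U \ W).filter (fun x => Poor x ∧ wsel x = X) with hUXdef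
    have hchild : ∀ X : Finset (Fin nb), ∃ g : Fin nb → ℕ, (∀ x, g x < cbFun (d*rb) n) ∧
        ∀ e ∈ BE, e ⊆ UX X → ∃ x ∈ e, ∃ y ∈ e, g x ≠ g y := by
      intro X
      by_cases hne : (UX X).Nonempty
      · obtain ⟨x₀, hx₀⟩ := hne
        simp only [hUXdef, Finset.mem_filter] at hx₀
        obtain ⟨hx₀UW, hx₀P, hx₀X⟩ := hx₀
        have hspec := hwspec x₀ hx₀P
        rw [hx₀X] at hspec
        obtain ⟨hXW, hXne, hSR, hSlb, _⟩ := hspec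
        have hSu : ∀ e' ∈ sectionOf γ' X, e'.card = rγ := by
          obtain ⟨y, hy⟩ := hXne
          intro e' he'
          exact hγu y e' (hγ'sub y (mem_sectionOf.1 he' y hy))
        have hRSu : ∀ e' ∈ R ∪ sectionOf γ' X, e'.card = rγ := by
          intro e' he'
          rcases Finset.mem_union.1 he' with h | h
          · exact hRu e' h
          · exact hSu e' h
        have hcardRS : ((R ∪ sectionOf γ' X).card : ℝ)
            = (R.card : ℝ) + ((sectionOf γ' X).card : ℝ) := by
          rw [Finset.card_union_of_disjoint hSR.symm]; push_cast; ring
        have hI2 : ∀ x ∈ UX X,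
            ((γ x ∩ (R ∪ sectionOf γ' X)).card : ℝ) ≤ α * ((R ∪ sectionOf γ' X).card : ℝ) := by
          intro x hx
          simp only [hUXdef, Finset.mem_filter] at hx
          obtain ⟨hxUW, hxP, hxX⟩ := hx
          have hspec := hwspec x hxP
          rw [hxX] at hspec
          have h1 := hRγ x (Finset.mem_sdiff.1 hxUW).1
          have h2 := hspec.2.2.2.2
          have hsplit : γ x ∩ (R ∪ sectionOf γ' X)
              = (γ x ∩ R) ∪ (γ x ∩ sectionOf γ' X) := Finset.inter_union_distrib_left _ _ _
          have hdisj : Disjoint (γ x ∩ R) (γ x ∩ sectionOf γ' X) :=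
            Finset.disjoint_of_subset_left Finset.inter_subset_right
              (Finset.disjoint_of_subset_right Finset.inter_subset_right hSR.symm)
          have heq : ((γ x ∩ (R ∪ sectionOf γ' X)).card : ℝ)
              = ((γ x ∩ R).card : ℝ) + ((γ x ∩ sectionOf γ' X).card : ℝ) := by
            rw [hsplit, Finset.card_union_of_disjoint hdisj]; push_cast; ring
          rw [heq, hcardRS]
          linarith
        have hI3 : ((D₀ : ℝ) - (n : ℝ)) * (α^(d-1) * C) ≤ ((R ∪ sectionOf γ' X).card : ℝ) := by
          rw [hcardRS]
          have h1 : ((D₀ : ℝ) - ((n+1 : ℕ) : ℝ)) * (α^(d-1) * C) ≤ (R.card : ℝ) := hR3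
          push_cast at h1
          nlinarith
        exact IH (R ∪ sectionOf γ' X) (UX X) hRSu hI2 hI3
      · refine ⟨fun _ => 0, fun _ => cbFun_pos _ _, ?_⟩
        intro e he hsub
        exfalso
        have hene : e.Nonempty := Finset.card_pos.1 (by have := hBE e he; omega)
        obtain ⟨x, hx⟩ := hene
        exact hne ⟨x, hsub hx⟩
    choose G hG1 hG2 using hchild
    set f : Fin nb → ℕ := fun x =>
      if x ∈ W then W.toList.idxOf x
      else if Poor x then
        d * rb + 1 + (W.powerset.toList.idxOf (wsel x)) * cbFun (d*rb) n + G (wsel x) x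
      else d * rb with hfdef
    have hidxW : ∀ x ∈ W, W.toList.idxOf x < d * rb := by
      intro x hx
      have h := List.idxOf_lt_length_iff.2 (Finset.mem_toList.2 hx)
      rw [Finset.length_toList] at h
      omega
    have hidxP : ∀ x, Poor x → W.powerset.toList.idxOf (wsel x) < 2 ^ (d * rb) := by
      intro x hx
      have hmem : wsel x ∈ W.powerset := Finset.mem_powerset.2 (hwspec x hx).1
      have h := List.idxOf_lt_length_iff.2 (Finset.mem_toList.2 hmem)
      rw [Finset.length_toList, Finset.card_powerset] at h
      calc W.powerset.toList.idxOf (wsel x) < 2 ^ W.card := h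
        _ ≤ 2 ^ (d * rb) := Nat.pow_le_pow_right (by omega) hWcard
    have hfW : ∀ x ∈ W, f x = W.toList.idxOf x := by
      intro x hx; simp only [hfdef]; simp only [if_pos hx]
    have hfP : ∀ x, x ∉ W → Poor x → f x =
        d * rb + 1 + (W.powerset.toList.idxOf (wsel x)) * cbFun (d*rb) n + G (wsel x) x := by
      intro x hx hp; simp only [hfdef]; simp only [if_neg hx, if_pos hp]
    have hfN : ∀ x, x ∉ W → ¬ Poor x → f x = d * rb := by
      intro x hx hp; simp only [hfdef]; simp only [if_neg hx, if_neg hp]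
    refine ⟨f, ?_, ?_⟩
    · intro x
      show f x < cbFun (d*rb) (n+1)
      have hcb : cbFun (d*rb) (n+1) = d*rb + 1 + 2^(d*rb) * cbFun (d*rb) n := rfl
      by_cases hxW : x ∈ W
      · rw [hfW x hxW, hcb]
        have h1 := hidxW x hxW
        omega
      · by_cases hxP : Poor x
        · rw [hfP x hxW hxP, hcb]
          have h1 := hidxP x hxP
          have h2 := hG1 (wsel x) x
          have h3 : (W.powerset.toList.idxOf (wsel x)) * cbFun (d*rb) n + G (wsel x) x
              < 2^(d*rb) * cbFun (d*rb) n := by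
            have h4 : (W.powerset.toList.idxOf (wsel x)) * cbFun (d*rb) n + G (wsel x) x
                < (W.powerset.toList.idxOf (wsel x) + 1) * cbFun (d*rb) n := by
              rw [Nat.succ_mul]; omega
            have h5 : (W.powerset.toList.idxOf (wsel x) + 1) * cbFun (d*rb) n
                ≤ 2^(d*rb) * cbFun (d*rb) n := Nat.mul_le_mul_right _ (by omega)
            omega
          omega
        · rw [hfN x hxW hxP, hcb]
          omega
    · intro e he heU
      by_cases hew : ∃ y ∈ e, y ∈ W
      · obtain ⟨y, hy, hyW⟩ := hew
        have h2 : 1 < e.card := by have := hBE e he; omega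
        obtain ⟨u, hu, v, hv, huv⟩ := Finset.one_lt_card.1 h2
        have hz : ∃ z ∈ e, z ≠ y := by
          by_cases hu' : u = y
          · exact ⟨v, hv, by rw [← hu']; exact fun h => huv h.symm⟩
          · exact ⟨u, hu, hu'⟩
        obtain ⟨z, hz, hzy⟩ := hz
        refine ⟨y, hy, z, hz, ?_⟩
        by_cases hzW : z ∈ W
        · rw [hfW y hyW, hfW z hzW]
          intro hEq
          exact hzy ((List.idxOf_inj (Finset.mem_toList.2 hzW)).1 hEq.symm)
        · have h3 := hidxW y hyW
          rw [hfW y hyW]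
          by_cases hzP : Poor z
          · rw [hfP z hzW hzP]; omega
          · rw [hfN z hzW hzP]; omega
      · push_neg at hew
        have heW : Disjoint e W := Finset.disjoint_left.2 hew
        obtain ⟨x, hxe, hxP⟩ := hfail e he heU heW
        by_cases hall : ∀ y ∈ e, Poor y
        · by_cases hsame : ∀ y ∈ e, wsel y = wsel x
          · have hesub : e ⊆ UX (wsel x) := by
              intro y hy
              simp only [hUXdef, Finset.mem_filter]
              exact ⟨Finset.mem_sdiff.2 ⟨heU hy, hew y hy⟩, hall y hy, hsame y hy⟩
            obtain ⟨x', hx', y', hy', hgne⟩ := hG2 (wsel x) e he hesub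
            refine ⟨x', hx', y', hy', ?_⟩
            rw [hfP x' (hew x' hx') (hall x' hx'), hfP y' (hew y' hy') (hall y' hy'),
              hsame x' hx', hsame y' hy']
            intro hEq
            exact hgne (by omega)
          · push_neg at hsame
            obtain ⟨y, hy, hyne⟩ := hsame
            refine ⟨x, hxe, y, hy, ?_⟩
            have hyP := hall y hy
            rw [hfP x (hew x hxe) hxP, hfP y (hew y hy) hyP]
            have hmx : wsel x ∈ W.powerset := Finset.mem_powerset.2 (hwspec x hxP).1
            have hmy : wsel y ∈ W.powerset := Finset.mem_powerset.2 (hwspec y hyP).1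
            have hidne : W.powerset.toList.idxOf (wsel x) ≠ W.powerset.toList.idxOf (wsel y) := by
              intro hEq
              exact hyne ((List.idxOf_inj (Finset.mem_toList.2 hmy)).1 hEq.symm)
            have := mul_add_ne (hG1 (wsel x) x) (hG1 (wsel y) y) hidne
            omega
        · push_neg at hall
          obtain ⟨y, hy, hyP⟩ := hall
          refine ⟨x, hxe, y, hy, ?_⟩
          rw [hfP x (hew x hxe) hxP, hfN y (hew y hy) hyP]
          omega

theorem fiber_bundle_coloring
    (rb rγ d : ℕ) (hrb : 2 ≤ rb) (hrγ : 1 ≤ rγ) (hd : 0 < d)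
    (ε : ℝ) (hε0 : 0 < ε) (hε1 : ε < 1)
    (mh : ℕ) (H : Finset (Finset (Fin mh))) (hH : ∀ e ∈ H, e.card = rγ)
    (hπ : Filter.Tendsto (fun N : ℕ => (exNum rγ H N : ℝ) / (N.choose rγ : ℝ))
      Filter.atTop (nhds 0)) :
    ∃ K₁ K₂ : ℕ, ∀ (nb nf : ℕ) (BE : Finset (Finset (Fin nb)))
      (γ : Fin nb → Finset (Finset (Fin nf))),
      (∀ e ∈ BE, e.card = rb) →
      (∀ b : Fin nb, ∀ e ∈ γ b, e.card = rγ) →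
      ¬ HasBundleDim BE γ H d →
      (∀ b : Fin nb, ε * (nf.choose rγ : ℝ) ≤ ((γ b).card : ℝ)) →
      K₁ ≤ nf → ChromAtMost BE K₂ := by
  classical
  have hδ : (0:ℝ) < (ε/2)^d := by positivity
  obtain ⟨N₀, hN₀⟩ := Metric.tendsto_atTop.1 hπ ((ε/2)^d) hδ
  set D₀ : ℕ := ⌈(2/ε)^(d-1)⌉₊ with hD₀def
  have hD₀ : (1:ℝ) ≤ (D₀ : ℝ) * (ε/2)^(d-1) := by
    have h1 : (2/ε)^(d-1) ≤ (D₀ : ℝ) := Nat.le_ceil _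
    have h2 : (0:ℝ) < (ε/2)^(d-1) := by positivity
    have h3 : (2/ε)^(d-1) * (ε/2)^(d-1) = 1 := by
      rw [← mul_pow]
      have : (2/ε) * (ε/2) = 1 := by field_simp
      rw [this, one_pow]
    nlinarith
  refine ⟨max N₀ rγ, cbFun (d * rb) D₀, ?_⟩
  intro nb nf BE γ hBE hγu hnd hγd hnf
  have hnfN₀ : N₀ ≤ nf := le_trans (le_max_left _ _) hnf
  have hnfrγ : rγ ≤ nf := le_trans (le_max_right _ _) hnf
  have hCpos : 0 < nf.choose rγ := Nat.choose_pos hnfrγ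
  have hC : (0:ℝ) < (nf.choose rγ : ℝ) := by exact_mod_cast hCpos
  have HK : ∀ G : Finset (Finset (Fin nf)), (∀ e ∈ G, e.card = rγ) →
      (ε/2)^d * (nf.choose rγ : ℝ) ≤ (G.card : ℝ) → Embeds H G := by
    intro G hGu hGcard
    by_contra hne
    have hmem : G.card ∈ {c : ℕ | ∃ G' : Finset (Finset (Fin nf)),
        (∀ e ∈ G', e.card = rγ) ∧ ¬ Embeds H G' ∧ G'.card = c} := ⟨G, hGu, hne, rfl⟩
    have hbdd : BddAbove {c : ℕ | ∃ G' : Finset (Finset (Fin nf)),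
        (∀ e ∈ G', e.card = rγ) ∧ ¬ Embeds H G' ∧ G'.card = c} := by
      refine ⟨2 ^ nf, ?_⟩
      rintro c ⟨G', _, _, rfl⟩
      have h := Finset.card_le_univ G'
      rwa [Fintype.card_finset, Fintype.card_fin] at h
    have hle : G.card ≤ exNum rγ H nf := le_csSup hbdd hmem
    have hdist := hN₀ nf hnfN₀
    rw [Real.dist_eq, sub_zero] at hdist
    have habs : (exNum rγ H nf : ℝ) / (nf.choose rγ : ℝ) < (ε/2)^d := by
      calc (exNum rγ H nf : ℝ) / (nf.choose rγ : ℝ)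
          ≤ |(exNum rγ H nf : ℝ) / (nf.choose rγ : ℝ)| := le_abs_self _
        _ < (ε/2)^d := hdist
    have hlt : (exNum rγ H nf : ℝ) < (ε/2)^d * (nf.choose rγ : ℝ) := by
      rw [div_lt_iff₀ hC] at habs
      linarith
    have : (G.card : ℝ) ≤ (exNum rγ H nf : ℝ) := by exact_mod_cast hle
    linarith
  obtain ⟨f, hf1, hf2⟩ := auxColor rb rγ d nb nf hrb hd ε hε0 hε1 BE γ hBE hγu hγd hC mh H
    HK hnd D₀ hD₀ D₀ ∅ Finset.univ (by simp) (by simp) (by simp)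
  refine ⟨fun x => ⟨f x, hf1 x⟩, ?_⟩
  intro e he
  obtain ⟨x, hx, y, hy, hne⟩ := hf2 e he (Finset.subset_univ e)
  exact ⟨x, hx, y, hy, fun hEq => hne (by simpa using congrArg Fin.val hEq)⟩
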